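/- For a CIR U over schema {A, ?B} where all cell distributions have finite support, U is possibly consistent with respect to the FD A → B (i.e., some positive-probability sample satisfies A → B) if and only if for every value a in the active domain of A, the intersection of the supports of the distributions U[i][?B] over all tuples i with U[i][A] = a is nonempty. -/
import Mathlib


/-- A CIR over `{A, ?B}` (certain `A`-values `Aval i`, finitely supported
cell distributions `p i` for `?B`) is possibly consistent with respect to the FD `A → B`
(some positive-probability sample satisfies `A → B`) iff for every value `a` in the active
domain of `A`, the intersection of the supports of the distributions of the tuples with
`A`-value `a` is nonempty. -/
theorem stmt2 {ι V : Type} [Fintype ι] [Fintype V] [DecidableEq V]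
    (Aval : ι → V) (p : ι → V → ℝ)
    (hnn : ∀ i b, 0 ≤ p i b) (hsum : ∀ i, ∑ b : V, p i b = 1) :
    (∃ r : ι → V, (∀ i j : ι, Aval i = Aval j → r i = r j) ∧ 0 < ∏ i : ι, p i (r i))
      ↔ ∀ a ∈ Finset.univ.image Aval, ∃ b : V, ∀ i : ι, Aval i = a → 0 < p i b := by
  constructor
  · rintro ⟨r, hfd, hpos⟩ a ha
    obtain ⟨j, -, hj⟩ := Finset.mem_image.mp ha
    refine ⟨r j, fun i hi => ?_⟩
    have hne : p i (r i) ≠ 0 := by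
      intro h0
      rw [Finset.prod_eq_zero (Finset.mem_univ i) h0] at hpos
      exact lt_irrefl 0 hpos
    have : 0 < p i (r i) := lt_of_le_of_ne (hnn i (r i)) (Ne.symm hne)
    rwa [hfd i j (by rw [hi, hj])] at this
  · intro h
    have hmem : ∀ i : ι, Aval i ∈ Finset.univ.image Aval := fun i =>
      Finset.mem_image_of_mem _ (Finset.mem_univ i)
    refine ⟨fun i => Classical.choose (h (Aval i) (hmem i)), ?_, ?_⟩
    · intro i j hij; simp only [hij]
    · refine Finset.prod_pos fun i _ => ?_
      exact Classical.choose_spec (h (Aval i) (hmem i)) i rfl
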